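/- Assume 0.9·d_{i0} ≤ d_i ≤ 1.1·d_{i0} for every i, 0 < ε ≤ 1/15, the Local RIP holds, and ‖𝒜*(e)‖ ≤ εd_0/(10√2·sκ). If (u^{(0)},v^{(0)}) satisfies ‖u_i^{(0)}‖ ≤ (2/√3)√d_{i0}, ‖v_i^{(0)}‖ ≤ (2/√3)√d_{i0}, √L‖Bu_i^{(0)}‖_∞ ≤ (4/√3)√d_{i0}μ, and δ_i(u_i^{(0)},v_i^{(0)}) ≤ 2ε/(5√s·κ) for all i, then G(u^{(0)},v^{(0)}) = 0 and F̃(u^{(0)},v^{(0)}) = F(u^{(0)},v^{(0)}) ≤ ‖e‖² + ε²d_0²/(3sκ²); in particular (u^{(0)},v^{(0)}) ∈ 𝒩_ε ∩ 𝒩_F̃. -/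

import Mathlib

noncomputable section
open Finset ComplexConjugate

namespace RGD

/-- Squared Euclidean norm of a complex vector. -/
def vnormSq {n : ℕ} (v : Fin n → ℂ) : ℝ := ∑ j, ‖v j‖ ^ 2

/-- Euclidean norm of a complex vector. -/
def vnorm {n : ℕ} (v : Fin n → ℂ) : ℝ := Real.sqrt (vnormSq v)

/-- Inner product, conjugate-linear in the first argument. -/
def vinner {n : ℕ} (u v : Fin n → ℂ) : ℂ := ∑ j, conj (u j) * v j

/-- Squared Frobenius norm of a matrix. -/
def frobSq {K N : ℕ} (Z : Matrix (Fin K) (Fin N) ℂ) : ℝ := ∑ k, ∑ j, ‖Z k j‖ ^ 2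

/-- Frobenius norm of a matrix. -/
def frob {K N : ℕ} (Z : Matrix (Fin K) (Fin N) ℂ) : ℝ := Real.sqrt (frobSq Z)

/-- Frobenius inner product `⟨U,V⟩ = Tr(U*V)`, conjugate-linear in the first argument. -/
def finner {K N : ℕ} (U V : Matrix (Fin K) (Fin N) ℂ) : ℂ := ∑ k, ∑ j, conj (U k j) * V k j

/-- Spectral (operator) norm of a matrix: sup of `‖Zv‖` over the closed unit ball. -/
def opNorm {K N : ℕ} (Z : Matrix (Fin K) (Fin N) ℂ) : ℝ :=
  sSup {r : ℝ | ∃ v : Fin N → ℂ, vnorm v ≤ 1 ∧ r = vnorm (Z.mulVec v)}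

/-- Squared Frobenius norm of a block-diagonal matrix, given by its diagonal blocks. -/
def famFrobSq {K N s : ℕ} (Z : Fin s → Matrix (Fin K) (Fin N) ℂ) : ℝ := ∑ i, frobSq (Z i)

/-- Frobenius norm of a block-diagonal matrix, given by its diagonal blocks. -/
def famFrob {K N s : ℕ} (Z : Fin s → Matrix (Fin K) (Fin N) ℂ) : ℝ := Real.sqrt (famFrobSq Z)

/-- The rank-one matrix `u v*`. -/
def rankOne {K N : ℕ} (u : Fin K → ℂ) (v : Fin N → ℂ) : Matrix (Fin K) (Fin N) ℂ :=
  Matrix.of fun k j => u k * conj (v j)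

/-- `ℋ(h,x)`: block-diagonal matrix with `i`-th block `hᵢ xᵢ*`. -/
def Hmap {K N s : ℕ} (h : Fin s → Fin K → ℂ) (x : Fin s → Fin N → ℂ) :
    Fin s → Matrix (Fin K) (Fin N) ℂ := fun i => rankOne (h i) (x i)

/-- `𝒜ᵢ(Z) = (bₗ* Z aₗ)ₗ`. -/
def calAi {K N L : ℕ} (b : Fin L → Fin K → ℂ) (a : Fin L → Fin N → ℂ)
    (Z : Matrix (Fin K) (Fin N) ℂ) : Fin L → ℂ :=
  fun l => vinner (b l) (Z.mulVec (a l))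

/-- `𝒜(Z) = Σᵢ 𝒜ᵢ(Zᵢ)` on block-diagonal matrices. -/
def calA {K N L s : ℕ} (b : Fin L → Fin K → ℂ) (a : Fin s → Fin L → Fin N → ℂ)
    (Z : Fin s → Matrix (Fin K) (Fin N) ℂ) : Fin L → ℂ :=
  fun l => ∑ i, calAi b (a i) (Z i) l

/-- `𝒜ᵢ*(z) = Σₗ zₗ bₗ aₗ*`. -/
def calAdj {K N L : ℕ} (b : Fin L → Fin K → ℂ) (a : Fin L → Fin N → ℂ)
    (z : Fin L → ℂ) : Matrix (Fin K) (Fin N) ℂ :=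
  Matrix.of fun k j => ∑ l, z l * b l k * conj (a l j)

/-- `‖𝒜*(e)‖ = maxᵢ ‖𝒜ᵢ*(e)‖` (operator norms). -/
def AadjNorm {K N L s : ℕ} (b : Fin L → Fin K → ℂ) (a : Fin s → Fin L → Fin N → ℂ)
    (e : Fin L → ℂ) : ℝ :=
  ⨆ i : Fin s, opNorm (calAdj b (a i) e)

/-- `B*B = I_K`, expressed in terms of the columns `bₗ` of `B*`. -/
def BtBeqI {K L : ℕ} (b : Fin L → Fin K → ℂ) : Prop :=
  ∀ k k' : Fin K, (∑ l, b l k * conj (b l k')) = if k = k' then (1 : ℂ) else 0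

/-- `μ ≥ μ_h`, i.e. `√L ‖B h_{i0}‖_∞ ≤ μ ‖h_{i0}‖` for all `i`. -/
def muhLe {K L s : ℕ} (b : Fin L → Fin K → ℂ) (h0 : Fin s → Fin K → ℂ) (μ : ℝ) : Prop :=
  ∀ i l, Real.sqrt L * ‖vinner (b l) (h0 i)‖ ≤ μ * vnorm (h0 i)

/-- `d₀ = √(Σᵢ d_{i0}²)`. -/
def dtot {s : ℕ} (d0 : Fin s → ℝ) : ℝ := Real.sqrt (∑ i, d0 i ^ 2)

/-- Condition number `κ = (maxᵢ d_{i0}) / (minᵢ d_{i0})`. -/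
def kappa {s : ℕ} (d0 : Fin s → ℝ) : ℝ := (⨆ i, d0 i) / (⨅ i, d0 i)

/-- The observation `y = 𝒜(ℋ(h₀,x₀)) + e`. -/
def yvec {K N L s : ℕ} (b : Fin L → Fin K → ℂ) (a : Fin s → Fin L → Fin N → ℂ)
    (h0 : Fin s → Fin K → ℂ) (x0 : Fin s → Fin N → ℂ) (e : Fin L → ℂ) : Fin L → ℂ :=
  fun l => calA b a (Hmap h0 x0) l + e l

/-- `F(h,x) = ‖𝒜(ℋ(h,x)) − y‖²`. -/
def Fobj {K N L s : ℕ} (b : Fin L → Fin K → ℂ) (a : Fin s → Fin L → Fin N → ℂ)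
    (h0 : Fin s → Fin K → ℂ) (x0 : Fin s → Fin N → ℂ) (e : Fin L → ℂ)
    (h : Fin s → Fin K → ℂ) (x : Fin s → Fin N → ℂ) : ℝ :=
  vnormSq (fun l => calA b a (Hmap h x) l - yvec b a h0 x0 e l)

def G0 (z : ℝ) : ℝ := max (z - 1) 0 ^ 2

def G0' (z : ℝ) : ℝ := 2 * max (z - 1) 0

/-- The `i`-th regularizer `Gᵢ(hᵢ,xᵢ)` (including the factor `ρ`). -/
def Gi {K N L : ℕ} (b : Fin L → Fin K → ℂ) (ρ μ di : ℝ)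
    (hi : Fin K → ℂ) (xi : Fin N → ℂ) : ℝ :=
  ρ * (G0 (vnormSq hi / (2 * di)) + G0 (vnormSq xi / (2 * di))
    + ∑ l, G0 ((L : ℝ) * ‖vinner (b l) hi‖ ^ 2 / (8 * di * μ ^ 2)))

/-- The regularizer `G(h,x) = Σᵢ Gᵢ(hᵢ,xᵢ)`. -/
def Greg {K N L s : ℕ} (b : Fin L → Fin K → ℂ) (ρ μ : ℝ) (dd : Fin s → ℝ)
    (h : Fin s → Fin K → ℂ) (x : Fin s → Fin N → ℂ) : ℝ :=
  ∑ i, Gi b ρ μ (dd i) (h i) (x i)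

/-- `F̃ = F + G`. -/
def Ftil {K N L s : ℕ} (b : Fin L → Fin K → ℂ) (a : Fin s → Fin L → Fin N → ℂ)
    (h0 : Fin s → Fin K → ℂ) (x0 : Fin s → Fin N → ℂ) (e : Fin L → ℂ)
    (ρ μ : ℝ) (dd : Fin s → ℝ)
    (h : Fin s → Fin K → ℂ) (x : Fin s → Fin N → ℂ) : ℝ :=
  Fobj b a h0 x0 e h x + Greg b ρ μ dd h x

/-- The residual `𝒜(ℋ(h,x)) − y`. -/
def residual {K N L s : ℕ} (b : Fin L → Fin K → ℂ) (a : Fin s → Fin L → Fin N → ℂ)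
    (h0 : Fin s → Fin K → ℂ) (x0 : Fin s → Fin N → ℂ) (e : Fin L → ℂ)
    (h : Fin s → Fin K → ℂ) (x : Fin s → Fin N → ℂ) : Fin L → ℂ :=
  fun l => calA b a (Hmap h x) l - yvec b a h0 x0 e l

/-- Wirtinger gradient `∇F_{hᵢ} = 𝒜ᵢ*(𝒜(ℋ(h,x)) − y) xᵢ`. -/
def gradFh {K N L s : ℕ} (b : Fin L → Fin K → ℂ) (a : Fin s → Fin L → Fin N → ℂ)
    (h0 : Fin s → Fin K → ℂ) (x0 : Fin s → Fin N → ℂ) (e : Fin L → ℂ)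
    (h : Fin s → Fin K → ℂ) (x : Fin s → Fin N → ℂ) (i : Fin s) : Fin K → ℂ :=
  (calAdj b (a i) (residual b a h0 x0 e h x)).mulVec (x i)

/-- Wirtinger gradient `∇F_{xᵢ} = (𝒜ᵢ*(𝒜(ℋ(h,x)) − y))* hᵢ`. -/
def gradFx {K N L s : ℕ} (b : Fin L → Fin K → ℂ) (a : Fin s → Fin L → Fin N → ℂ)
    (h0 : Fin s → Fin K → ℂ) (x0 : Fin s → Fin N → ℂ) (e : Fin L → ℂ)
    (h : Fin s → Fin K → ℂ) (x : Fin s → Fin N → ℂ) (i : Fin s) : Fin N → ℂ :=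
  (calAdj b (a i) (residual b a h0 x0 e h x)).conjTranspose.mulVec (h i)

/-- Wirtinger gradient `∇G_{hᵢ}`. -/
def gradGh {K L s : ℕ} (b : Fin L → Fin K → ℂ) (ρ μ : ℝ) (dd : Fin s → ℝ)
    (h : Fin s → Fin K → ℂ) (i : Fin s) : Fin K → ℂ :=
  fun k => ((ρ / (2 * dd i) : ℝ) : ℂ) *
    (((G0' (vnormSq (h i) / (2 * dd i)) : ℝ) : ℂ) * h i k
      + (((L : ℝ) / (4 * μ ^ 2) : ℝ) : ℂ) *
        ∑ l, ((G0' ((L : ℝ) * ‖vinner (b l) (h i)‖ ^ 2 / (8 * dd i * μ ^ 2)) : ℝ) : ℂ)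
          * (vinner (b l) (h i) * b l k))

/-- Wirtinger gradient `∇G_{xᵢ}`. -/
def gradGx {N s : ℕ} (ρ : ℝ) (dd : Fin s → ℝ)
    (x : Fin s → Fin N → ℂ) (i : Fin s) : Fin N → ℂ :=
  fun j => ((ρ / (2 * dd i) : ℝ) : ℂ) * (((G0' (vnormSq (x i) / (2 * dd i)) : ℝ) : ℂ) * x i j)

/-- `∇F̃_{hᵢ} = ∇F_{hᵢ} + ∇G_{hᵢ}`. -/
def gradH {K N L s : ℕ} (b : Fin L → Fin K → ℂ) (a : Fin s → Fin L → Fin N → ℂ)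
    (h0 : Fin s → Fin K → ℂ) (x0 : Fin s → Fin N → ℂ) (e : Fin L → ℂ)
    (ρ μ : ℝ) (dd : Fin s → ℝ)
    (h : Fin s → Fin K → ℂ) (x : Fin s → Fin N → ℂ) (i : Fin s) : Fin K → ℂ :=
  fun k => gradFh b a h0 x0 e h x i k + gradGh b ρ μ dd h i k

/-- `∇F̃_{xᵢ} = ∇F_{xᵢ} + ∇G_{xᵢ}`. -/
def gradX {K N L s : ℕ} (b : Fin L → Fin K → ℂ) (a : Fin s → Fin L → Fin N → ℂ)
    (h0 : Fin s → Fin K → ℂ) (x0 : Fin s → Fin N → ℂ) (e : Fin L → ℂ)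
    (ρ μ : ℝ) (dd : Fin s → ℝ)
    (h : Fin s → Fin K → ℂ) (x : Fin s → Fin N → ℂ) (i : Fin s) : Fin N → ℂ :=
  fun j => gradFx b a h0 x0 e h x i j + gradGx ρ dd x i j

/-- `‖∇F̃(h,x)‖²` (squared norm of the stacked Wirtinger gradient). -/
def gradNormSq {K N L s : ℕ} (b : Fin L → Fin K → ℂ) (a : Fin s → Fin L → Fin N → ℂ)
    (h0 : Fin s → Fin K → ℂ) (x0 : Fin s → Fin N → ℂ) (e : Fin L → ℂ)
    (ρ μ : ℝ) (dd : Fin s → ℝ)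
    (h : Fin s → Fin K → ℂ) (x : Fin s → Fin N → ℂ) : ℝ :=
  ∑ i, vnormSq (gradH b a h0 x0 e ρ μ dd h x i) + ∑ i, vnormSq (gradX b a h0 x0 e ρ μ dd h x i)

/-- `‖∇F̃(h',x') − ∇F̃(h,x)‖²`. -/
def gradDiffNormSq {K N L s : ℕ} (b : Fin L → Fin K → ℂ) (a : Fin s → Fin L → Fin N → ℂ)
    (h0 : Fin s → Fin K → ℂ) (x0 : Fin s → Fin N → ℂ) (e : Fin L → ℂ)
    (ρ μ : ℝ) (dd : Fin s → ℝ)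
    (h : Fin s → Fin K → ℂ) (x : Fin s → Fin N → ℂ)
    (h' : Fin s → Fin K → ℂ) (x' : Fin s → Fin N → ℂ) : ℝ :=
  ∑ i, vnormSq (fun k => gradH b a h0 x0 e ρ μ dd h' x' i k - gradH b a h0 x0 e ρ μ dd h x i k)
  + ∑ i, vnormSq (fun j => gradX b a h0 x0 e ρ μ dd h' x' i j - gradX b a h0 x0 e ρ μ dd h x i j)

/-- Membership in `𝒩_d`. -/
def inNd {K N s : ℕ} (d0 : Fin s → ℝ)
    (h : Fin s → Fin K → ℂ) (x : Fin s → Fin N → ℂ) : Prop :=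
  ∀ i, vnorm (h i) ≤ 2 * Real.sqrt (d0 i) ∧ vnorm (x i) ≤ 2 * Real.sqrt (d0 i)

/-- Membership in `𝒩_μ`. -/
def inNmu {K L s : ℕ} (b : Fin L → Fin K → ℂ) (d0 : Fin s → ℝ) (μ : ℝ)
    (h : Fin s → Fin K → ℂ) : Prop :=
  ∀ i, ∀ l, Real.sqrt L * ‖vinner (b l) (h i)‖ ≤ 4 * Real.sqrt (d0 i) * μ

/-- `δᵢ(hᵢ,xᵢ) = ‖hᵢxᵢ* − h_{i0}x_{i0}*‖_F / d_{i0}`. -/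
def deltaI {K N : ℕ} (h0i : Fin K → ℂ) (x0i : Fin N → ℂ) (d0i : ℝ)
    (hi : Fin K → ℂ) (xi : Fin N → ℂ) : ℝ :=
  frob (rankOne hi xi - rankOne h0i x0i) / d0i

/-- Membership in `𝒩_ε`. -/
def inNeps {K N s : ℕ} (h0 : Fin s → Fin K → ℂ) (x0 : Fin s → Fin N → ℂ)
    (d0 : Fin s → ℝ) (ε : ℝ)
    (h : Fin s → Fin K → ℂ) (x : Fin s → Fin N → ℂ) : Prop :=
  ∀ i, deltaI (h0 i) (x0 i) (d0 i) (h i) (x i) ≤ ε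

/-- The global relative error `δ(h,x) = ‖ℋ(h,x) − X₀‖_F / d₀`. -/
def deltaTot {K N s : ℕ} (h0 : Fin s → Fin K → ℂ) (x0 : Fin s → Fin N → ℂ)
    (d0 : Fin s → ℝ)
    (h : Fin s → Fin K → ℂ) (x : Fin s → Fin N → ℂ) : ℝ :=
  famFrob (fun i => Hmap h x i - Hmap h0 x0 i) / dtot d0

/-- Membership in `𝒩_F̃`. -/
def inNF {K N L s : ℕ} (b : Fin L → Fin K → ℂ) (a : Fin s → Fin L → Fin N → ℂ)
    (h0 : Fin s → Fin K → ℂ) (x0 : Fin s → Fin N → ℂ) (e : Fin L → ℂ)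
    (d0 : Fin s → ℝ) (ρ μ : ℝ) (dd : Fin s → ℝ) (ε : ℝ)
    (h : Fin s → Fin K → ℂ) (x : Fin s → Fin N → ℂ) : Prop :=
  Ftil b a h0 x0 e ρ μ dd h x ≤ ε ^ 2 * dtot d0 ^ 2 / (3 * (s : ℝ) * kappa d0 ^ 2) + vnormSq e

/-- The Local Restricted Isometry Property on `𝒩_d ∩ 𝒩_μ ∩ 𝒩_ε`. -/
def LocalRIP {K N L s : ℕ} (b : Fin L → Fin K → ℂ) (a : Fin s → Fin L → Fin N → ℂ)
    (h0 : Fin s → Fin K → ℂ) (x0 : Fin s → Fin N → ℂ)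
    (d0 : Fin s → ℝ) (μ ε : ℝ) : Prop :=
  ∀ (h : Fin s → Fin K → ℂ) (x : Fin s → Fin N → ℂ),
    inNd d0 h x → inNmu b d0 μ h → inNeps h0 x0 d0 ε h x →
      (2 / 3) * famFrobSq (fun i => Hmap h x i - Hmap h0 x0 i)
          ≤ vnormSq (calA b a fun i => Hmap h x i - Hmap h0 x0 i)
      ∧ vnormSq (calA b a fun i => Hmap h x i - Hmap h0 x0 i)
          ≤ (3 / 2) * famFrobSq (fun i => Hmap h x i - Hmap h0 x0 i)

/-- `α_{i1} = ⟨h_{i0}, hᵢ⟩ / d_{i0}`. -/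
def alpha1 {K s : ℕ} (h0 : Fin s → Fin K → ℂ) (d0 : Fin s → ℝ)
    (h : Fin s → Fin K → ℂ) (i : Fin s) : ℂ :=
  vinner (h0 i) (h i) / ((d0 i : ℝ) : ℂ)

/-- `α_{i2} = ⟨x_{i0}, xᵢ⟩ / d_{i0}`. -/
def alpha2 {N s : ℕ} (x0 : Fin s → Fin N → ℂ) (d0 : Fin s → ℝ)
    (x : Fin s → Fin N → ℂ) (i : Fin s) : ℂ :=
  vinner (x0 i) (x i) / ((d0 i : ℝ) : ℂ)

/-- `δ₀ = δ/10`. -/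
def delta0 {K N s : ℕ} (h0 : Fin s → Fin K → ℂ) (x0 : Fin s → Fin N → ℂ)
    (d0 : Fin s → ℝ) (h : Fin s → Fin K → ℂ) (x : Fin s → Fin N → ℂ) : ℝ :=
  deltaTot h0 x0 d0 h x / 10

/-- `αᵢ = (1−δ₀)α_{i1}` if `‖hᵢ‖ ≥ ‖xᵢ‖`, else `1/((1−δ₀) conj(α_{i2}))`. -/
def alphaC {K N s : ℕ} (h0 : Fin s → Fin K → ℂ) (x0 : Fin s → Fin N → ℂ)
    (d0 : Fin s → ℝ) (h : Fin s → Fin K → ℂ) (x : Fin s → Fin N → ℂ) (i : Fin s) : ℂ :=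
  if vnorm (x i) ≤ vnorm (h i)
  then ((1 - delta0 h0 x0 d0 h x : ℝ) : ℂ) * alpha1 h0 d0 h i
  else 1 / (((1 - delta0 h0 x0 d0 h x : ℝ) : ℂ) * conj (alpha2 x0 d0 x i))

/-- `Δhᵢ = hᵢ − αᵢ h_{i0}`. -/
def dh {K N s : ℕ} (h0 : Fin s → Fin K → ℂ) (x0 : Fin s → Fin N → ℂ)
    (d0 : Fin s → ℝ) (h : Fin s → Fin K → ℂ) (x : Fin s → Fin N → ℂ) (i : Fin s) :
    Fin K → ℂ :=
  fun k => h i k - alphaC h0 x0 d0 h x i * h0 i k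

/-- `Δxᵢ = xᵢ − conj(αᵢ)⁻¹ x_{i0}`. -/
def dx {K N s : ℕ} (h0 : Fin s → Fin K → ℂ) (x0 : Fin s → Fin N → ℂ)
    (d0 : Fin s → ℝ) (h : Fin s → Fin K → ℂ) (x : Fin s → Fin N → ℂ) (i : Fin s) :
    Fin N → ℂ :=
  fun j => x i j - (conj (alphaC h0 x0 d0 h x i))⁻¹ * x0 i j

/-- `σ²_max(h,x) = maxₗ Σᵢ |bₗ*hᵢ|² ‖xᵢ‖²`. -/
def sigmaMaxSq {K N L s : ℕ} (b : Fin L → Fin K → ℂ)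
    (h : Fin s → Fin K → ℂ) (x : Fin s → Fin N → ℂ) : ℝ :=
  ⨆ l : Fin L, ∑ i, ‖vinner (b l) (h i)‖ ^ 2 * vnormSq (x i)

/-- The rank-one bound (Lemma: `𝒜` on block-diagonal matrices with rank-1 blocks). -/
def RankOneBound {K N L s : ℕ} (b : Fin L → Fin K → ℂ)
    (a : Fin s → Fin L → Fin N → ℂ) : Prop :=
  ∀ (h : Fin s → Fin K → ℂ) (x : Fin s → Fin N → ℂ),
    vnormSq (calA b a (Hmap h x)) ≤
      4 / 3 * famFrobSq (Hmap h x)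
      + 2 * Real.sqrt (2 * (s : ℝ) * famFrobSq (Hmap h x) * sigmaMaxSq b h x
          * ((K : ℝ) + N) * Real.log L)
      + 8 * (s : ℝ) * sigmaMaxSq b h x * ((K : ℝ) + N) * Real.log L

/-- The subspace `Tᵢ = {h_{i0} v* + u x_{i0}*}`. -/
def Tspace {K N : ℕ} (h0i : Fin K → ℂ) (x0i : Fin N → ℂ) :
    Set (Matrix (Fin K) (Fin N) ℂ) :=
  {Z | ∃ (u : Fin K → ℂ) (v : Fin N → ℂ), Z = rankOne h0i v + rankOne u x0i}

/-- `P` is the orthogonal projection onto `Tᵢ` w.r.t. the Frobenius inner product. -/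
def IsFrobProj {K N : ℕ} (h0i : Fin K → ℂ) (x0i : Fin N → ℂ)
    (P : Matrix (Fin K) (Fin N) ℂ → Matrix (Fin K) (Fin N) ℂ) : Prop :=
  ∀ Z, P Z ∈ Tspace h0i x0i ∧ ∀ W ∈ Tspace h0i x0i, finner W (Z - P Z) = 0

/-- Operator norm of `𝒜ᵢ` from `(ℂ^{K×N}, ‖·‖_F)` to `(ℂ^L, ‖·‖)`. -/
def calAiOpNorm {K N L : ℕ} (b : Fin L → Fin K → ℂ) (a : Fin L → Fin N → ℂ) : ℝ :=
  sSup {r : ℝ | ∃ Z : Matrix (Fin K) (Fin N) ℂ, frob Z ≤ 1 ∧ r = vnorm (calAi b a Z)}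

/-- Operator norm of `𝒜` from block-diagonal matrices with `‖·‖_F` to `ℂ^L`. -/
def calAOpNorm {K N L s : ℕ} (b : Fin L → Fin K → ℂ)
    (a : Fin s → Fin L → Fin N → ℂ) : ℝ :=
  sSup {r : ℝ | ∃ Z : Fin s → Matrix (Fin K) (Fin N) ℂ, famFrob Z ≤ 1 ∧ r = vnorm (calA b a Z)}

/-- Norm of a stacked vector in `ℂ^{ns}`. -/
def stackNorm {n s : ℕ} (u : Fin s → Fin n → ℂ) : ℝ := Real.sqrt (∑ i, vnormSq (u i))

/-- Norm of a point `z = (h,x) ∈ ℂ^{s(K+N)}`. -/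
def pairNorm {K N s : ℕ} (u : Fin s → Fin K → ℂ) (v : Fin s → Fin N → ℂ) : ℝ :=
  Real.sqrt (∑ i, vnormSq (u i) + ∑ i, vnormSq (v i))

/-- `z + t • w` componentwise, `t` real. -/
def shiftV {n s : ℕ} (u w : Fin s → Fin n → ℂ) (t : ℝ) : Fin s → Fin n → ℂ :=
  fun i k => u i k + (t : ℂ) * w i k

/-- `σ_max(h) = maxₗ √(Σᵢ |bₗ*hᵢ|²)` (unit `xᵢ`'s). -/
def sigmaMaxU {K L s : ℕ} (b : Fin L → Fin K → ℂ) (h : Fin s → Fin K → ℂ) : ℝ :=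
  ⨆ l, Real.sqrt (∑ i, ‖vinner (b l) (h i)‖ ^ 2)

/-! ### Auxiliary lemmas -/

section AuxLemmas

variable {n K N L s : ℕ}

lemma vnormSq_nonneg (v : Fin n → ℂ) : 0 ≤ vnormSq v :=
  Finset.sum_nonneg fun _ _ => by positivity

lemma vnorm_nonneg (v : Fin n → ℂ) : 0 ≤ vnorm v := Real.sqrt_nonneg _

lemma vnorm_sq (v : Fin n → ℂ) : vnorm v ^ 2 = vnormSq v := Real.sq_sqrt (vnormSq_nonneg v)

lemma frobSq_nonneg (M : Matrix (Fin K) (Fin N) ℂ) : 0 ≤ frobSq M :=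
  Finset.sum_nonneg fun _ _ => Finset.sum_nonneg fun _ _ => by positivity

lemma frob_nonneg (M : Matrix (Fin K) (Fin N) ℂ) : 0 ≤ frob M := Real.sqrt_nonneg _

lemma frob_sq (M : Matrix (Fin K) (Fin N) ℂ) : frob M ^ 2 = frobSq M :=
  Real.sq_sqrt (frobSq_nonneg M)

lemma norm_vinner_le (u v : Fin n → ℂ) : ‖vinner u v‖ ≤ vnorm u * vnorm v := by
  have h := norm_inner_le_norm (𝕜 := ℂ) (E := EuclideanSpace ℂ (Fin n))
    ((WithLp.equiv 2 _).symm u) ((WithLp.equiv 2 _).symm v)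
  simpa [vinner, vnorm, vnormSq, EuclideanSpace.norm_eq, PiLp.inner_apply,
    RCLike.inner_apply, mul_comm] using h

lemma vnorm_smul (c : ℂ) (v : Fin n → ℂ) :
    vnorm (fun j => c * v j) = ‖c‖ * vnorm v := by
  unfold vnorm vnormSq
  rw [← Real.sqrt_sq (norm_nonneg c), ← Real.sqrt_mul (by positivity), Finset.mul_sum]
  congr 1
  exact Finset.sum_congr rfl fun j _ => by rw [norm_mul, mul_pow]

lemma vnorm_eq_zero {v : Fin n → ℂ} (h : vnorm v = 0) : v = 0 := by
  have h2 : vnormSq v = 0 := by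
    have := vnorm_sq v
    rw [h] at this; simpa using this.symm
  funext j
  have := (Finset.sum_eq_zero_iff_of_nonneg (fun i _ => by positivity)).mp h2 j (Finset.mem_univ j)
  simpa using this

lemma vnorm_mulVec_le_frob (M : Matrix (Fin K) (Fin N) ℂ) (v : Fin N → ℂ) :
    vnorm (M.mulVec v) ≤ frob M * vnorm v := by
  have hsq : vnormSq (M.mulVec v) ≤ frobSq M * vnormSq v := by
    unfold vnormSq frobSq
    rw [Finset.sum_mul]
    refine Finset.sum_le_sum fun k _ => ?_
    have h1 : ‖M.mulVec v k‖ ≤ vnorm (fun j => conj (M k j)) * vnorm v := by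
      have h := norm_vinner_le (fun j => conj (M k j)) v
      simpa [vinner, Matrix.mulVec, dotProduct] using h
    calc ‖M.mulVec v k‖ ^ 2 ≤ (vnorm (fun j => conj (M k j)) * vnorm v) ^ 2 := by
          exact pow_le_pow_left₀ (norm_nonneg _) h1 2
      _ = vnormSq (fun j => conj (M k j)) * vnormSq v := by
          rw [mul_pow, vnorm_sq, vnorm_sq]
      _ = (∑ j, ‖M k j‖ ^ 2) * (∑ j, ‖v j‖ ^ 2) := by
          simp [vnormSq]
  calc vnorm (M.mulVec v) = Real.sqrt (vnormSq (M.mulVec v)) := rfl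
    _ ≤ Real.sqrt (frobSq M * vnormSq v) := Real.sqrt_le_sqrt hsq
    _ = frob M * vnorm v := by
        rw [Real.sqrt_mul (frobSq_nonneg M)]; rfl

lemma opNorm_bddAbove (M : Matrix (Fin K) (Fin N) ℂ) :
    BddAbove {r : ℝ | ∃ v : Fin N → ℂ, vnorm v ≤ 1 ∧ r = vnorm (M.mulVec v)} := by
  refine ⟨frob M, ?_⟩
  rintro r ⟨v, hv, rfl⟩
  calc vnorm (M.mulVec v) ≤ frob M * vnorm v := vnorm_mulVec_le_frob M v
    _ ≤ frob M * 1 := by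
        exact mul_le_mul_of_nonneg_left hv (frob_nonneg M)
    _ = frob M := mul_one _

lemma opNorm_mem_zero (M : Matrix (Fin K) (Fin N) ℂ) :
    (0 : ℝ) ∈ {r : ℝ | ∃ v : Fin N → ℂ, vnorm v ≤ 1 ∧ r = vnorm (M.mulVec v)} := by
  refine ⟨0, ?_, ?_⟩
  · simp [vnorm, vnormSq]
  · simp [Matrix.mulVec_zero, vnorm, vnormSq]

lemma opNorm_nonneg (M : Matrix (Fin K) (Fin N) ℂ) : 0 ≤ opNorm M :=
  le_csSup (opNorm_bddAbove M) (opNorm_mem_zero M)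

lemma vnorm_mulVec_le_opNorm (M : Matrix (Fin K) (Fin N) ℂ) (v : Fin N → ℂ) :
    vnorm (M.mulVec v) ≤ opNorm M * vnorm v := by
  by_cases h : vnorm v = 0
  · have hv0 : v = 0 := vnorm_eq_zero h
    subst hv0
    simp [Matrix.mulVec_zero, h, vnorm, vnormSq]
  · have hvpos : 0 < vnorm v := lt_of_le_of_ne (vnorm_nonneg v) (Ne.symm h)
    set c : ℝ := (vnorm v)⁻¹ with hc
    have hcpos : 0 < c := inv_pos.mpr hvpos
    have hmv : M.mulVec (fun j => (c : ℂ) * v j) = fun k => (c : ℂ) * M.mulVec v k := by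
      funext k
      simp only [Matrix.mulVec, dotProduct, Finset.mul_sum]
      exact Finset.sum_congr rfl fun j _ => by ring
    have hv1 : vnorm (fun j => (c : ℂ) * v j) = 1 := by
      rw [vnorm_smul, Complex.norm_real, Real.norm_eq_abs, abs_of_pos hcpos, hc]
      exact inv_mul_cancel₀ h
    have hmem : vnorm (M.mulVec (fun j => (c : ℂ) * v j)) ∈
        {r : ℝ | ∃ w : Fin N → ℂ, vnorm w ≤ 1 ∧ r = vnorm (M.mulVec w)} :=
      ⟨_, le_of_eq hv1, rfl⟩
    have hle : vnorm (M.mulVec (fun j => (c : ℂ) * v j)) ≤ opNorm M :=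
      le_csSup (opNorm_bddAbove M) hmem
    have heq : vnorm (M.mulVec (fun j => (c : ℂ) * v j)) = c * vnorm (M.mulVec v) := by
      rw [hmv, vnorm_smul, Complex.norm_real, Real.norm_eq_abs, abs_of_pos hcpos]
    rw [heq] at hle
    calc vnorm (M.mulVec v) = vnorm v * (c * vnorm (M.mulVec v)) := by
          rw [hc, ← mul_assoc, mul_inv_cancel₀ h, one_mul]
      _ ≤ vnorm v * opNorm M := mul_le_mul_of_nonneg_left hle (le_of_lt hvpos)
      _ = opNorm M * vnorm v := mul_comm _ _

lemma finner_rankOne (p : Fin K → ℂ) (q : Fin N → ℂ) (M : Matrix (Fin K) (Fin N) ℂ) :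
    finner (rankOne p q) M = vinner p (M.mulVec q) := by
  simp only [finner, rankOne, vinner, Matrix.mulVec, dotProduct, Matrix.of_apply,
    map_mul, Complex.conj_conj, Finset.mul_sum]
  exact Finset.sum_congr rfl fun k _ => Finset.sum_congr rfl fun j _ => by ring

lemma finner_rankOne_rankOne (p p' : Fin K → ℂ) (q q' : Fin N → ℂ) :
    finner (rankOne p q) (rankOne p' q') = vinner p p' * vinner q' q := by
  simp only [finner, rankOne, vinner, Matrix.of_apply, map_mul, Complex.conj_conj]
  rw [Finset.sum_mul_sum]
  exact Finset.sum_congr rfl fun k _ => Finset.sum_congr rfl fun j _ => by ring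

lemma frobSq_rankOne (p : Fin K → ℂ) (q : Fin N → ℂ) :
    frobSq (rankOne p q) = vnormSq p * vnormSq q := by
  simp only [frobSq, rankOne, vnormSq, Matrix.of_apply]
  rw [Finset.sum_mul_sum]
  refine Finset.sum_congr rfl fun k _ => Finset.sum_congr rfl fun j _ => ?_
  rw [norm_mul, mul_pow]
  simp

lemma finner_add_left (A B M : Matrix (Fin K) (Fin N) ℂ) :
    finner (A + B) M = finner A M + finner B M := by
  simp [finner, Matrix.add_apply, map_add, add_mul, Finset.sum_add_distrib]

lemma norm_add_sq_c (z w : ℂ) :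
    ‖z + w‖ ^ 2 = ‖z‖ ^ 2 + ‖w‖ ^ 2 + 2 * (conj z * w).re := by
  have h := Complex.normSq_add z w
  have h1 : (z * conj w).re = (conj z * w).re := by
    have : conj (z * conj w) = conj z * w := by
      rw [map_mul, Complex.conj_conj]
    rw [← this, Complex.conj_re]
  simp only [← Complex.normSq_eq_norm_sq]
  rw [h, h1]

lemma norm_sub_sq_c (z w : ℂ) :
    ‖z - w‖ ^ 2 = ‖z‖ ^ 2 - 2 * (conj z * w).re + ‖w‖ ^ 2 := by
  have h := Complex.normSq_sub z w
  have h1 : (z * conj w).re = (conj z * w).re := by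
    have : conj (z * conj w) = conj z * w := by
      rw [map_mul, Complex.conj_conj]
    rw [← this, Complex.conj_re]
  simp only [← Complex.normSq_eq_norm_sq]
  rw [h, h1]; ring

lemma frobSq_add (A B : Matrix (Fin K) (Fin N) ℂ) :
    frobSq (A + B) = frobSq A + frobSq B + 2 * (finner A B).re := by
  simp only [frobSq, finner, Matrix.add_apply]
  rw [Complex.re_sum, Finset.mul_sum]
  rw [← Finset.sum_add_distrib, ← Finset.sum_add_distrib]
  refine Finset.sum_congr rfl fun k _ => ?_
  rw [Complex.re_sum, Finset.mul_sum]
  rw [← Finset.sum_add_distrib, ← Finset.sum_add_distrib]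
  exact Finset.sum_congr rfl fun j _ => norm_add_sq_c _ _

lemma vnormSq_sub_expand (f e : Fin L → ℂ) :
    vnormSq (fun l => f l - e l)
      = vnormSq f - 2 * (∑ l, conj (f l) * e l).re + vnormSq e := by
  simp only [vnormSq, norm_sub_sq_c]
  rw [Complex.re_sum, Finset.mul_sum, Finset.sum_add_distrib, Finset.sum_sub_distrib]

lemma vinner_self (u : Fin n → ℂ) : vinner u u = (vnormSq u : ℝ) := by
  simp only [vinner, vnormSq]
  push_cast
  refine Finset.sum_congr rfl fun j _ => ?_
  rw [mul_comm, Complex.mul_conj, Complex.normSq_eq_norm_sq]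
  push_cast
  ring

lemma cross_bound (h0i : Fin K → ℂ) (d : ℝ) (hd : 0 < d)
    (hh : vnormSq h0i = d) (x0i : Fin N → ℂ) (u : Fin K → ℂ) (v : Fin N → ℂ)
    (M : Matrix (Fin K) (Fin N) ℂ) :
    ‖finner (rankOne u v - rankOne h0i x0i) M‖
      ≤ Real.sqrt 2 * opNorm M * frob (rankOne u v - rankOne h0i x0i) := by
  set α : ℂ := vinner h0i u / (d : ℂ) with hα
  set up : Fin K → ℂ := fun k => u k - α * h0i k with hup
  set w : Fin N → ℂ := fun j => conj α * v j - x0i j with hw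
  have hdecomp : rankOne u v - rankOne h0i x0i = rankOne h0i w + rankOne up v := by
    ext k j
    simp only [rankOne, Matrix.sub_apply, Matrix.add_apply, Matrix.of_apply, hup, hw,
      map_sub, map_mul, Complex.conj_conj]
    ring
  have horth : vinner h0i up = 0 := by
    have h1 : vinner h0i up = vinner h0i u - α * vinner h0i h0i := by
      simp only [vinner, hup, mul_sub, Finset.sum_sub_distrib, Finset.mul_sum]
      congr 1
      exact Finset.sum_congr rfl fun k _ => by ring
    rw [h1, vinner_self, hh, hα]
    have hdne : (d : ℂ) ≠ 0 := by exact_mod_cast ne_of_gt hd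
    field_simp
    ring
  have hcross : finner (rankOne h0i w) (rankOne up v) = 0 := by
    rw [finner_rankOne_rankOne, horth, zero_mul]
  have hfs : frobSq (rankOne h0i w + rankOne up v)
      = frobSq (rankOne h0i w) + frobSq (rankOne up v) := by
    rw [frobSq_add, hcross]; simp
  set aa : ℝ := vnorm h0i * vnorm w with haa
  set bb : ℝ := vnorm up * vnorm v with hbb
  have haa0 : 0 ≤ aa := mul_nonneg (vnorm_nonneg _) (vnorm_nonneg _)
  have hbb0 : 0 ≤ bb := mul_nonneg (vnorm_nonneg _) (vnorm_nonneg _)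
  have hA : ‖finner (rankOne h0i w) M‖ ≤ opNorm M * aa := by
    rw [finner_rankOne]
    calc ‖vinner h0i (M.mulVec w)‖ ≤ vnorm h0i * vnorm (M.mulVec w) := norm_vinner_le _ _
      _ ≤ vnorm h0i * (opNorm M * vnorm w) :=
          mul_le_mul_of_nonneg_left (vnorm_mulVec_le_opNorm M w) (vnorm_nonneg _)
      _ = opNorm M * aa := by rw [haa]; ring
  have hB : ‖finner (rankOne up v) M‖ ≤ opNorm M * bb := by
    rw [finner_rankOne]
    calc ‖vinner up (M.mulVec v)‖ ≤ vnorm up * vnorm (M.mulVec v) := norm_vinner_le _ _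
      _ ≤ vnorm up * (opNorm M * vnorm v) :=
          mul_le_mul_of_nonneg_left (vnorm_mulVec_le_opNorm M v) (vnorm_nonneg _)
      _ = opNorm M * bb := by rw [hbb]; ring
  have hfrobeq : frobSq (rankOne u v - rankOne h0i x0i) = aa ^ 2 + bb ^ 2 := by
    rw [hdecomp, hfs, frobSq_rankOne, frobSq_rankOne, haa, hbb,
      mul_pow, mul_pow, vnorm_sq, vnorm_sq, vnorm_sq, vnorm_sq]
  have hab : aa + bb ≤ Real.sqrt 2 * frob (rankOne u v - rankOne h0i x0i) := by
    have h2 : (aa + bb) ^ 2 ≤ 2 * (aa ^ 2 + bb ^ 2) := by nlinarith [sq_nonneg (aa - bb)]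
    calc aa + bb = Real.sqrt ((aa + bb) ^ 2) := (Real.sqrt_sq (by linarith)).symm
      _ ≤ Real.sqrt (2 * (aa ^ 2 + bb ^ 2)) := Real.sqrt_le_sqrt h2
      _ = Real.sqrt 2 * Real.sqrt (aa ^ 2 + bb ^ 2) := Real.sqrt_mul (by norm_num) _
      _ = Real.sqrt 2 * frob (rankOne u v - rankOne h0i x0i) := by
          rw [← hfrobeq]; rfl
  calc ‖finner (rankOne u v - rankOne h0i x0i) M‖
      = ‖finner (rankOne h0i w) M + finner (rankOne up v) M‖ := by
        rw [← finner_add_left, ← hdecomp]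
    _ ≤ ‖finner (rankOne h0i w) M‖ + ‖finner (rankOne up v) M‖ := norm_add_le _ _
    _ ≤ opNorm M * aa + opNorm M * bb := add_le_add hA hB
    _ = opNorm M * (aa + bb) := by ring
    _ ≤ opNorm M * (Real.sqrt 2 * frob (rankOne u v - rankOne h0i x0i)) :=
        mul_le_mul_of_nonneg_left hab (opNorm_nonneg M)
    _ = Real.sqrt 2 * opNorm M * frob (rankOne u v - rankOne h0i x0i) := by ring

lemma adjoint_id (b : Fin L → Fin K → ℂ) (a : Fin L → Fin N → ℂ)
    (Z : Matrix (Fin K) (Fin N) ℂ) (e : Fin L → ℂ) :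
    ∑ l, conj (calAi b a Z l) * e l = finner Z (calAdj b a e) := by
  simp only [calAi, calAdj, finner, vinner, Matrix.mulVec, dotProduct,
    Matrix.of_apply, map_sum, map_mul, Complex.conj_conj, Finset.sum_mul, Finset.mul_sum]
  rw [Finset.sum_comm]
  refine Finset.sum_congr rfl fun k _ => ?_
  rw [Finset.sum_comm]
  exact Finset.sum_congr rfl fun j _ => Finset.sum_congr rfl fun l _ => by ring

end AuxLemmas
set_option maxHeartbeats 1000000

/-- the initial guess lies in `𝒩_ε ∩ 𝒩_F̃`. -/
theorem statement5
    {K N L s : ℕ} (hK : 0 < K) (hN : 0 < N) (hL : 0 < L) (hs : 0 < s)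
    (b : Fin L → Fin K → ℂ) (hb : BtBeqI b)
    (a : Fin s → Fin L → Fin N → ℂ)
    (h0 : Fin s → Fin K → ℂ) (x0 : Fin s → Fin N → ℂ)
    (d0 : Fin s → ℝ) (hd0 : ∀ i, 0 < d0 i)
    (hh0 : ∀ i, vnorm (h0 i) = Real.sqrt (d0 i))
    (hx0 : ∀ i, vnorm (x0 i) = Real.sqrt (d0 i))
    (e : Fin L → ℂ) (μ ρ ε : ℝ) (dd : Fin s → ℝ)
    (hμ : 0 < μ) (hρ0 : 0 < ρ) (hε : 0 < ε) (hε15 : ε ≤ 1 / 15)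
    (hdd : ∀ i, 0.9 * d0 i ≤ dd i ∧ dd i ≤ 1.1 * d0 i)
    (hRIP : LocalRIP b a h0 x0 d0 μ ε)
    (hAe : AadjNorm b a e ≤ ε * dtot d0 / (10 * Real.sqrt 2 * (s : ℝ) * kappa d0))
    (u0 : Fin s → Fin K → ℂ) (v0 : Fin s → Fin N → ℂ)
    (hu0d : ∀ i, vnorm (u0 i) ≤ 2 / Real.sqrt 3 * Real.sqrt (d0 i))
    (hv0d : ∀ i, vnorm (v0 i) ≤ 2 / Real.sqrt 3 * Real.sqrt (d0 i))
    (hu0μ : ∀ i l, Real.sqrt L * ‖vinner (b l) (u0 i)‖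
        ≤ 4 / Real.sqrt 3 * Real.sqrt (d0 i) * μ)
    (hinit : ∀ i, deltaI (h0 i) (x0 i) (d0 i) (u0 i) (v0 i)
        ≤ 2 * ε / (5 * Real.sqrt s * kappa d0)) :
    Greg b ρ μ dd u0 v0 = 0
    ∧ Ftil b a h0 x0 e ρ μ dd u0 v0 = Fobj b a h0 x0 e u0 v0
    ∧ Fobj b a h0 x0 e u0 v0
        ≤ vnormSq e + ε ^ 2 * dtot d0 ^ 2 / (3 * (s : ℝ) * kappa d0 ^ 2)
    ∧ inNeps h0 x0 d0 ε u0 v0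
    ∧ inNF b a h0 x0 e d0 ρ μ dd ε u0 v0 := by

  -- basic positivity facts
  have hsR : (0:ℝ) < s := by exact_mod_cast hs
  haveI : Nonempty (Fin s) := ⟨⟨0, hs⟩⟩
  have hddpos : ∀ i, 0 < dd i := fun i => lt_of_lt_of_le (by nlinarith [hd0 i]) (hdd i).1
  have h3 : (1:ℝ) ≤ Real.sqrt 3 := by
    rw [show (1:ℝ) = Real.sqrt 1 from Real.sqrt_one.symm]
    exact Real.sqrt_le_sqrt (by norm_num)
  have h3pos : (0:ℝ) < Real.sqrt 3 := lt_of_lt_of_le one_pos h3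
  have hG0 : ∀ z : ℝ, z ≤ 1 → G0 z = 0 := fun z hz => by
    simp [G0, max_eq_right (sub_nonpos.mpr hz)]
  have h3sq : Real.sqrt 3 ^ 2 = 3 := Real.sq_sqrt (by norm_num)
  have hu0sq : ∀ i, vnormSq (u0 i) ≤ 4/3 * d0 i := by
    intro i
    have h2 : vnorm (u0 i) ^ 2 ≤ (2 / Real.sqrt 3 * Real.sqrt (d0 i)) ^ 2 :=
      pow_le_pow_left₀ (vnorm_nonneg _) (hu0d i) 2
    rw [vnorm_sq] at h2
    have h4 : (2 / Real.sqrt 3 * Real.sqrt (d0 i)) ^ 2 = 4/3 * d0 i := by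
      rw [mul_pow, div_pow, h3sq, Real.sq_sqrt (hd0 i).le]
      norm_num
    linarith [h2, h4.le, h4.ge]
  have hv0sq : ∀ i, vnormSq (v0 i) ≤ 4/3 * d0 i := by
    intro i
    have h2 : vnorm (v0 i) ^ 2 ≤ (2 / Real.sqrt 3 * Real.sqrt (d0 i)) ^ 2 :=
      pow_le_pow_left₀ (vnorm_nonneg _) (hv0d i) 2
    rw [vnorm_sq] at h2
    have h4 : (2 / Real.sqrt 3 * Real.sqrt (d0 i)) ^ 2 = 4/3 * d0 i := by
      rw [mul_pow, div_pow, h3sq, Real.sq_sqrt (hd0 i).le]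
      norm_num
    linarith [h2, h4.le, h4.ge]
  -- G vanishes at (u0, v0)
  have hGreg : Greg b ρ μ dd u0 v0 = 0 := by
    unfold Greg Gi
    refine Finset.sum_eq_zero fun i _ => ?_
    have hdi := hd0 i
    have hddi := (hdd i).1
    have e1 : G0 (vnormSq (u0 i) / (2 * dd i)) = 0 := by
      apply hG0
      rw [div_le_one (by linarith [hddpos i])]
      have := hu0sq i
      nlinarith
    have e2 : G0 (vnormSq (v0 i) / (2 * dd i)) = 0 := by
      apply hG0
      rw [div_le_one (by linarith [hddpos i])]
      have := hv0sq i
      nlinarith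
    have e3 : ∀ l, G0 ((L:ℝ) * ‖vinner (b l) (u0 i)‖ ^ 2 / (8 * dd i * μ ^ 2)) = 0 := by
      intro l
      apply hG0
      rw [div_le_one (mul_pos (by linarith [hddpos i] : (0:ℝ) < 8 * dd i) (pow_pos hμ 2))]
      have h1 := hu0μ i l
      have h2 : (Real.sqrt L * ‖vinner (b l) (u0 i)‖) ^ 2
          ≤ (4 / Real.sqrt 3 * Real.sqrt (d0 i) * μ) ^ 2 :=
        pow_le_pow_left₀ (by positivity) h1 2
      have h3' : (Real.sqrt L * ‖vinner (b l) (u0 i)‖) ^ 2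
          = (L:ℝ) * ‖vinner (b l) (u0 i)‖ ^ 2 := by
        rw [mul_pow, Real.sq_sqrt (Nat.cast_nonneg L)]
      have h4 : (4 / Real.sqrt 3 * Real.sqrt (d0 i) * μ) ^ 2 = 16/3 * d0 i * μ ^ 2 := by
        rw [mul_pow, mul_pow, div_pow, h3sq, Real.sq_sqrt (hd0 i).le]
        norm_num
      rw [h3'] at h2
      rw [h4] at h2
      nlinarith [sq_nonneg μ]
    rw [e1, e2, Finset.sum_eq_zero fun l _ => e3 l]
    ring
  have hFtileq : Ftil b a h0 x0 e ρ μ dd u0 v0 = Fobj b a h0 x0 e u0 v0 := by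
    unfold Ftil
    rw [hGreg, add_zero]
  -- kappa and sqrt s facts
  obtain ⟨i₀, hi₀⟩ := exists_eq_ciInf_of_finite (f := d0)
  have hinfpos : 0 < ⨅ i, d0 i := hi₀ ▸ hd0 i₀
  have hsupinf : ⨅ i, d0 i ≤ ⨆ i, d0 i := by
    calc ⨅ i, d0 i ≤ d0 i₀ := ciInf_le (Set.Finite.bddBelow (Set.finite_range d0)) i₀
      _ ≤ ⨆ i, d0 i := le_ciSup (Set.Finite.bddAbove (Set.finite_range d0)) i₀
  have hk1 : 1 ≤ kappa d0 := (one_le_div hinfpos).mpr hsupinf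
  have hkpos : 0 < kappa d0 := lt_of_lt_of_le one_pos hk1
  have hσ1 : 1 ≤ Real.sqrt s := by
    rw [show (1:ℝ) = Real.sqrt 1 from Real.sqrt_one.symm]
    exact Real.sqrt_le_sqrt (by exact_mod_cast hs)
  have hσpos : 0 < Real.sqrt s := lt_of_lt_of_le one_pos hσ1
  have hσsq : Real.sqrt s ^ 2 = (s:ℝ) := Real.sq_sqrt (Nat.cast_nonneg s)
  have hD0 : 0 ≤ dtot d0 := Real.sqrt_nonneg _
  have hD2 : dtot d0 ^ 2 = ∑ i, d0 i ^ 2 :=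
    Real.sq_sqrt (Finset.sum_nonneg fun i _ => sq_nonneg _)
  set ε2 : ℝ := 2 * ε / (5 * Real.sqrt s * kappa d0) with hε2def
  have hε2pos : 0 < ε2 := by rw [hε2def]; positivity
  -- membership in the neighborhoods
  have hNeps : inNeps h0 x0 d0 ε u0 v0 := by
    intro i
    refine le_trans (hinit i) ?_
    rw [hε2def] at *
    rw [div_le_iff₀ (by positivity)]
    nlinarith [mul_le_mul hσ1 hk1 (by norm_num) (le_of_lt hσpos)]
  have hNd : inNd d0 u0 v0 := by
    intro i
    constructor
    · refine le_trans (hu0d i) ?_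
      exact mul_le_mul_of_nonneg_right (div_le_self (by norm_num) h3) (Real.sqrt_nonneg _)
    · refine le_trans (hv0d i) ?_
      exact mul_le_mul_of_nonneg_right (div_le_self (by norm_num) h3) (Real.sqrt_nonneg _)
  have hNmu : inNmu b d0 μ u0 := by
    intro i l
    refine le_trans (hu0μ i l) ?_
    exact mul_le_mul_of_nonneg_right
      (mul_le_mul_of_nonneg_right (div_le_self (by norm_num) h3) (Real.sqrt_nonneg _)) hμ.le
  obtain ⟨-, hRIP2⟩ := hRIP u0 v0 hNd hNmu hNeps
  set Δ : Fin s → Matrix (Fin K) (Fin N) ℂ := fun i => Hmap u0 v0 i - Hmap h0 x0 i with hΔ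
  -- Frobenius-norm bounds on the blocks
  have hfrb : ∀ i, frob (Δ i) ≤ ε2 * d0 i := by
    intro i
    have h1 := hinit i
    rw [deltaI, div_le_iff₀ (hd0 i)] at h1
    exact h1
  have hffsq : famFrobSq Δ ≤ ε2 ^ 2 * dtot d0 ^ 2 := by
    calc famFrobSq Δ = ∑ i, frob (Δ i) ^ 2 := by
          unfold famFrobSq
          exact Finset.sum_congr rfl fun i _ => (frob_sq _).symm
      _ ≤ ∑ i, (ε2 * d0 i) ^ 2 :=
          Finset.sum_le_sum fun i _ => pow_le_pow_left₀ (frob_nonneg _) (hfrb i) 2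
      _ = ε2 ^ 2 * ∑ i, d0 i ^ 2 := by
          rw [Finset.mul_sum]
          exact Finset.sum_congr rfl fun i _ => by ring
      _ = ε2 ^ 2 * dtot d0 ^ 2 := by rw [hD2]
  have hsumfrb : ∑ i, frob (Δ i) ≤ ε2 * (Real.sqrt s * dtot d0) := by
    have h2 : ∑ i, d0 i ≤ Real.sqrt s * dtot d0 := by
      have h3' : (∑ i, d0 i) ^ 2 ≤ (s:ℝ) * ∑ i, d0 i ^ 2 := by
        have := sq_sum_le_card_mul_sum_sq (s := (Finset.univ : Finset (Fin s))) (f := d0)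
        simpa using this
      calc ∑ i, d0 i = Real.sqrt ((∑ i, d0 i) ^ 2) :=
            (Real.sqrt_sq (Finset.sum_nonneg fun i _ => (hd0 i).le)).symm
        _ ≤ Real.sqrt ((s:ℝ) * ∑ i, d0 i ^ 2) := Real.sqrt_le_sqrt h3'
        _ = Real.sqrt s * dtot d0 := by rw [Real.sqrt_mul (Nat.cast_nonneg s)]; rfl
    calc ∑ i, frob (Δ i) ≤ ∑ i, ε2 * d0 i := Finset.sum_le_sum fun i _ => hfrb i
      _ = ε2 * ∑ i, d0 i := (Finset.mul_sum _ _ _).symm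
      _ ≤ ε2 * (Real.sqrt s * dtot d0) := mul_le_mul_of_nonneg_left h2 hε2pos.le
  -- rewrite the objective
  have hcalAi_sub : ∀ (i : Fin s) (Z1 Z2 : Matrix (Fin K) (Fin N) ℂ) (l : Fin L),
      calAi b (a i) (Z1 - Z2) l = calAi b (a i) Z1 l - calAi b (a i) Z2 l := by
    intro i Z1 Z2 l
    simp [calAi, Matrix.sub_mulVec, vinner, Pi.sub_apply, mul_sub, Finset.sum_sub_distrib]
  have hres : (fun l => calA b a (Hmap u0 v0) l - yvec b a h0 x0 e l)
      = fun l => calA b a Δ l - e l := by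
    funext l
    simp only [calA, yvec, hΔ]
    rw [Finset.sum_congr rfl fun i _ => hcalAi_sub i _ _ l, Finset.sum_sub_distrib]
    ring
  set Tsum : ℂ := ∑ l, conj (calA b a Δ l) * e l with hTsumdef
  have hFobj : Fobj b a h0 x0 e u0 v0
      = vnormSq (calA b a Δ) - 2 * Tsum.re + vnormSq e := by
    unfold Fobj
    rw [show (fun l => calA b a (Hmap u0 v0) l - yvec b a h0 x0 e l)
        = fun l => calA b a Δ l - e l from hres]
    rw [vnormSq_sub_expand]
  set Me : Fin s → Matrix (Fin K) (Fin N) ℂ := fun i => calAdj b (a i) e with hMe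
  have hT : Tsum = ∑ i, finner (Δ i) (Me i) := by
    rw [hTsumdef]
    calc ∑ l, conj (calA b a Δ l) * e l
        = ∑ l, ∑ i, conj (calAi b (a i) (Δ i) l) * e l := by
          refine Finset.sum_congr rfl fun l _ => ?_
          simp only [calA, map_sum, Finset.sum_mul]
      _ = ∑ i, ∑ l, conj (calAi b (a i) (Δ i) l) * e l := Finset.sum_comm
      _ = ∑ i, finner (Δ i) (Me i) :=
          Finset.sum_congr rfl fun i _ => adjoint_id _ _ _ _
  set Ebd : ℝ := ε * dtot d0 / (10 * Real.sqrt 2 * (s:ℝ) * kappa d0) with hEbddef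
  have hEbd0 : 0 ≤ Ebd := by
    rw [hEbddef]
    positivity
  have hAe' : (⨆ i : Fin s, opNorm (Me i)) ≤ Ebd := hAe
  have hEi : ∀ i, opNorm (Me i) ≤ Ebd := fun i =>
    le_trans (le_ciSup (Set.Finite.bddAbove
      (Set.finite_range fun j => opNorm (Me j))) i) hAe'
  have hcr : ∀ i, ‖finner (Δ i) (Me i)‖ ≤ Real.sqrt 2 * Ebd * frob (Δ i) := by
    intro i
    have hvsq : vnormSq (h0 i) = d0 i := by
      rw [← vnorm_sq, hh0 i, Real.sq_sqrt (hd0 i).le]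
    have h1 := cross_bound (h0 i) (d0 i) (hd0 i) hvsq (x0 i) (u0 i) (v0 i) (Me i)
    calc ‖finner (Δ i) (Me i)‖
        ≤ Real.sqrt 2 * opNorm (Me i) * frob (Δ i) := h1
      _ ≤ Real.sqrt 2 * Ebd * frob (Δ i) :=
          mul_le_mul_of_nonneg_right
            (mul_le_mul_of_nonneg_left (hEi i) (Real.sqrt_nonneg 2)) (frob_nonneg _)
  have hTnorm : ‖Tsum‖ ≤ Real.sqrt 2 * Ebd * (ε2 * (Real.sqrt s * dtot d0)) := by
    rw [hT]
    calc ‖∑ i, finner (Δ i) (Me i)‖ ≤ ∑ i, ‖finner (Δ i) (Me i)‖ := norm_sum_le _ _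
      _ ≤ ∑ i, Real.sqrt 2 * Ebd * frob (Δ i) := Finset.sum_le_sum fun i _ => hcr i
      _ = Real.sqrt 2 * Ebd * ∑ i, frob (Δ i) := (Finset.mul_sum _ _ _).symm
      _ ≤ Real.sqrt 2 * Ebd * (ε2 * (Real.sqrt s * dtot d0)) :=
          mul_le_mul_of_nonneg_left hsumfrb (mul_nonneg (Real.sqrt_nonneg 2) hEbd0)
  have hre : -Tsum.re ≤ ‖Tsum‖ := by
    have h1 := Complex.abs_re_le_norm Tsum
    have h2 := neg_le_abs Tsum.re
    linarith
  -- numerics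
  have hr2pos : (0:ℝ) < Real.sqrt 2 := Real.sqrt_pos.mpr (by norm_num)
  have hr2sq : Real.sqrt 2 ^ 2 = 2 := Real.sq_sqrt (by norm_num)
  have hnum : (3/2) * (ε2 ^ 2 * dtot d0 ^ 2)
        + 2 * (Real.sqrt 2 * Ebd * (ε2 * (Real.sqrt s * dtot d0)))
      = 8/25 * (ε ^ 2 * dtot d0 ^ 2 / ((s:ℝ) * kappa d0 ^ 2)) := by
    rw [hε2def, hEbddef, ← hσsq]
    have hσne : Real.sqrt s ≠ 0 := ne_of_gt hσpos
    have hκne : kappa d0 ≠ 0 := ne_of_gt hkpos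
    have hr2ne : Real.sqrt 2 ≠ 0 := ne_of_gt hr2pos
    field_simp
    linear_combination (-(1500 * dtot d0 ^ 2)) * Real.sq_sqrt (sq_nonneg (Real.sqrt (s:ℝ)))
  have hnum2 : 8/25 * (ε ^ 2 * dtot d0 ^ 2 / ((s:ℝ) * kappa d0 ^ 2))
      ≤ ε ^ 2 * dtot d0 ^ 2 / (3 * (s:ℝ) * kappa d0 ^ 2) := by
    have hX : 0 ≤ ε ^ 2 * dtot d0 ^ 2 / ((s:ℝ) * kappa d0 ^ 2) := by positivity
    have : ε ^ 2 * dtot d0 ^ 2 / (3 * (s:ℝ) * kappa d0 ^ 2)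
        = 1/3 * (ε ^ 2 * dtot d0 ^ 2 / ((s:ℝ) * kappa d0 ^ 2)) := by ring
    rw [this]
    linarith
  have hFbound : Fobj b a h0 x0 e u0 v0
      ≤ vnormSq e + ε ^ 2 * dtot d0 ^ 2 / (3 * (s:ℝ) * kappa d0 ^ 2) := by
    rw [hFobj]
    have h1 : vnormSq (calA b a Δ) ≤ (3/2) * (ε2 ^ 2 * dtot d0 ^ 2) := by
      calc vnormSq (calA b a Δ) ≤ (3/2) * famFrobSq Δ := hRIP2
        _ ≤ (3/2) * (ε2 ^ 2 * dtot d0 ^ 2) := by linarith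
    have h2 : -(2 * Tsum.re) ≤ 2 * (Real.sqrt 2 * Ebd * (ε2 * (Real.sqrt s * dtot d0))) := by
      linarith
    linarith
  refine ⟨hGreg, hFtileq, hFbound, hNeps, ?_⟩
  unfold inNF
  rw [hFtileq]
  linarith


end RGD
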